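/- Let G be a finite connected simple graph that is not bipartite and satisfies χ(G) ≤ 4 (for example, any nonbipartite planar graph, by the Four Color Theorem). Then G has a spanning tree T such that BBC_2(G,T) = 4. -/

import Mathlib

/-- A proper `k`-coloring of `G`: colors are taken in `{1, …, k}` and adjacent
vertices receive different colors. -/
def IsProperColoring {V : Type*} (G : SimpleGraph V) (k : ℕ) (c : V → ℕ) : Prop :=
  (∀ v : V, 1 ≤ c v ∧ c v ≤ k) ∧ ∀ ⦃u v : V⦄, G.Adj u v → c u ≠ c v

/-- The chromatic number of `G`: the least `k` such that `G` has a proper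
`k`-coloring. -/
noncomputable def chromNum {V : Type*} (G : SimpleGraph V) : ℕ :=
  sInf {k : ℕ | ∃ c : V → ℕ, IsProperColoring G k c}

/-- A `q`-backbone `k`-coloring of `(G, H)`: a proper `k`-coloring of `G` such
that the colors of the endpoints of every edge of `H` differ by at least `q`. -/
def IsBackboneColoring {V : Type*} (G H : SimpleGraph V) (q k : ℕ) (c : V → ℕ) : Prop :=
  IsProperColoring G k c ∧ ∀ ⦃u v : V⦄, H.Adj u v → (q : ℤ) ≤ |(c u : ℤ) - (c v : ℤ)|

/-- The `q`-backbone chromatic number `BBC_q(G, H)`: the least `k` for which a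
`q`-backbone `k`-coloring of `(G, H)` exists. -/
noncomputable def BBC {V : Type*} (G H : SimpleGraph V) (q : ℕ) : ℕ :=
  sInf {k : ℕ | ∃ c : V → ℕ, IsBackboneColoring G H q k c}

/-- `G` is bipartite: its vertices can be split in two parts such that every
edge joins the two parts. -/
def IsBipartite {V : Type*} (G : SimpleGraph V) : Prop :=
  ∃ f : V → Bool, ∀ ⦃u v : V⦄, G.Adj u v → f u ≠ f v

open SimpleGraph

section Aux

variable {V : Type*}

/-- The subgraph of `G` consisting of edges whose endpoint colors differ by at least 2. -/
private def Good (G : SimpleGraph V) (c : V → ℕ) : SimpleGraph V where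
  Adj u v := G.Adj u v ∧ 2 ≤ |(c u : ℤ) - (c v : ℤ)|
  symm := by
    refine ⟨?_⟩
    intro u v h
    exact ⟨h.1.symm, by rw [abs_sub_comm]; exact h.2⟩
  loopless := by
    refine ⟨?_⟩
    intro v h
    exact G.loopless.irrefl v h.1

private lemma exists_cross {G : SimpleGraph V} (S : Set V) :
    ∀ {u w : V}, G.Walk u w → u ∈ S → w ∉ S → ∃ a b, a ∈ S ∧ b ∉ S ∧ G.Adj a b := by
  intro u w p
  induction p with
  | nil => exact fun hu hw => absurd hu hw
  | @cons a x w h q ih =>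
    intro hu hw
    by_cases hx : x ∈ S
    · exact ih hx hw
    · exact ⟨a, x, hu, hx, h⟩

private lemma reach_mono_aux {G : SimpleGraph V} {c c' : V → ℕ} {v0 : V}
    (hagree : ∀ x, (Good G c).Reachable v0 x → c' x = c x) :
    ∀ {a x : V}, (Good G c).Walk a x → (Good G c).Reachable v0 a →
      (Good G c').Reachable v0 a → (Good G c').Reachable v0 x := by
  intro a x p
  induction p with
  | nil => exact fun _ h => h
  | @cons a y x h q ih =>
    intro h1 h2
    have hy : (Good G c).Reachable v0 y := h1.trans h.reachable
    have hadj : (Good G c').Adj a y := ⟨h.1, by rw [hagree a h1, hagree y hy]; exact h.2⟩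
    exact ih hy (h2.trans hadj.reachable)

private lemma reach_mono {G : SimpleGraph V} {c c' : V → ℕ} {v0 : V}
    (hagree : ∀ x, (Good G c).Reachable v0 x → c' x = c x)
    {x : V} (hx : (Good G c).Reachable v0 x) : (Good G c').Reachable v0 x := by
  obtain ⟨p⟩ := hx
  exact reach_mono_aux hagree p (Reachable.refl v0) (Reachable.refl v0)

private lemma recolor_proper {G : SimpleGraph V} {c : V → ℕ} (hc : IsProperColoring G 4 c)
    (S : Set V) [DecidablePred (· ∈ S)] (σ : ℕ → ℕ)
    (hrange : ∀ n, 1 ≤ n → n ≤ 4 → 1 ≤ σ n ∧ σ n ≤ 4)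
    (hinj : ∀ m n, m ≤ 4 → n ≤ 4 → σ m = σ n → m = n)
    (hbdry : ∀ a b, a ∈ S → b ∉ S → G.Adj a b → c a ≠ σ (c b)) :
    IsProperColoring G 4 (fun x => if x ∈ S then c x else σ (c x)) := by
  constructor
  · intro v
    by_cases hv : v ∈ S
    · simpa [hv] using hc.1 v
    · simpa [hv] using hrange _ (hc.1 v).1 (hc.1 v).2
  · intro u v huv
    by_cases hu : u ∈ S <;> by_cases hv : v ∈ S
    · simpa [hu, hv] using hc.2 huv
    · simpa [hu, hv] using hbdry u v hu hv huv
    · simp only [if_neg hu, if_pos hv]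
      exact fun h => hbdry v u hv hu huv.symm h.symm
    · simp only [if_neg hu, if_neg hv]
      exact fun h => hc.2 huv (hinj _ _ (hc.1 u).2 (hc.1 v).2 h)

private def sg1 (n : ℕ) : ℕ :=
  if n = 1 then 3 else if n = 2 then 4 else if n = 3 then 1 else if n = 4 then 2 else n

private def sg2 (n : ℕ) : ℕ := if n = 1 then 4 else if n = 4 then 1 else n

private def sg3 (n : ℕ) : ℕ := if n = 1 then 3 else if n = 3 then 4 else if n = 4 then 1 else n

private def sg4 (n : ℕ) : ℕ := if n = 1 then 4 else if n = 2 then 1 else if n = 4 then 2 else n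

private lemma extend {G : SimpleGraph V} (hG : G.Preconnected) {c : V → ℕ}
    (hc : IsProperColoring G 4 c) (v0 : V) {w : V} (hw : ¬ (Good G c).Reachable v0 w) :
    ∃ c', IsProperColoring G 4 c' ∧
      (∀ x, (Good G c).Reachable v0 x → (Good G c').Reachable v0 x) ∧
      ∃ y, ¬ (Good G c).Reachable v0 y ∧ (Good G c').Reachable v0 y := by
  classical
  set S : Set V := {x | (Good G c).Reachable v0 x} with hSdef
  by_cases hall : ∃ a b, a ∈ S ∧ b ∉ S ∧ (Good G c).Adj a b
  · obtain ⟨a, b, ha, hb, hab⟩ := hall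
    exact ⟨c, hc, fun x hx => hx, b, hb, Reachable.trans ha hab.reachable⟩
  push_neg at hall
  have hcons : ∀ u v, u ∈ S → v ∉ S → G.Adj u v → (c u = c v + 1 ∨ c v = c u + 1) := by
    intro u v hu hv huv
    have h1 : ¬ (2 ≤ |(c u : ℤ) - (c v : ℤ)|) := fun hh => hall u v hu hv ⟨huv, hh⟩
    rw [not_le, abs_lt] at h1
    have h2 : c u ≠ c v := hc.2 huv
    omega
  have hbd : ∀ v : V, 1 ≤ c v ∧ c v ≤ 4 := hc.1
  have finish : ∀ (σ : ℕ → ℕ) (a b : V), a ∈ S → b ∉ S → G.Adj a b →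
      (∀ n, 1 ≤ n → n ≤ 4 → 1 ≤ σ n ∧ σ n ≤ 4) →
      (∀ m n, m ≤ 4 → n ≤ 4 → σ m = σ n → m = n) →
      (∀ u v, u ∈ S → v ∉ S → G.Adj u v → c u ≠ σ (c v)) →
      (2 ≤ |(c a : ℤ) - (σ (c b) : ℤ)|) →
      ∃ c', IsProperColoring G 4 c' ∧
        (∀ x, (Good G c).Reachable v0 x → (Good G c').Reachable v0 x) ∧
        ∃ y, ¬ (Good G c).Reachable v0 y ∧ (Good G c').Reachable v0 y := by
    intro σ a b ha hb hab hrange hinj hbdry hallow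
    have hagree : ∀ x, (Good G c).Reachable v0 x →
        (fun x => if x ∈ S then c x else σ (c x)) x = c x := by
      intro x hx
      simp only [if_pos (show x ∈ S from hx)]
    refine ⟨fun x => if x ∈ S then c x else σ (c x),
      recolor_proper hc S σ hrange hinj hbdry, fun x hx => reach_mono hagree hx, b, hb, ?_⟩
    have hadj : (Good G (fun x => if x ∈ S then c x else σ (c x))).Adj a b := by
      refine ⟨hab, ?_⟩
      simp only [if_pos ha, if_neg hb]
      exact hallow
    exact (reach_mono hagree ha).trans hadj.reachable
  by_cases h12 : ∃ a b, a ∈ S ∧ b ∉ S ∧ G.Adj a b ∧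
      ((c a = 1 ∧ c b = 2) ∨ (c a = 4 ∧ c b = 3))
  · obtain ⟨a, b, ha, hb, hab, hp⟩ := h12
    refine finish sg1 a b ha hb hab ?_ ?_ ?_ ?_
    · intro n h1 h4; interval_cases n <;> decide
    · intro m n hm hn; interval_cases m <;> interval_cases n <;> decide
    · intro u v hu hv huv
      have hcc := hcons u v hu hv huv
      have hbu := hbd u; have hbv := hbd v
      have h4 : c v = 1 ∨ c v = 2 ∨ c v = 3 ∨ c v = 4 := by omega
      rcases h4 with h|h|h|h <;> rw [h] <;> simp only [sg1] <;> norm_num <;> omega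
    · rcases hp with ⟨h1, h2⟩ | ⟨h1, h2⟩ <;> rw [h1, h2] <;> norm_num [sg1]
  by_cases h21 : ∃ a b, a ∈ S ∧ b ∉ S ∧ G.Adj a b ∧
      ((c a = 2 ∧ c b = 1) ∨ (c a = 3 ∧ c b = 4))
  · obtain ⟨a, b, ha, hb, hab, hp⟩ := h21
    refine finish sg2 a b ha hb hab ?_ ?_ ?_ ?_
    · intro n h1 h4; interval_cases n <;> decide
    · intro m n hm hn; interval_cases m <;> interval_cases n <;> decide
    · intro u v hu hv huv
      have hcc := hcons u v hu hv huv
      have hbu := hbd u; have hbv := hbd v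
      have h4 : c v = 1 ∨ c v = 2 ∨ c v = 3 ∨ c v = 4 := by omega
      rcases h4 with h|h|h|h <;> rw [h] <;> simp only [sg2] <;> norm_num <;> omega
    · rcases hp with ⟨h1, h2⟩ | ⟨h1, h2⟩ <;> rw [h1, h2] <;> norm_num [sg2]
  by_cases h23 : ∃ a b, a ∈ S ∧ b ∉ S ∧ G.Adj a b ∧ (c a = 2 ∧ c b = 3)
  · obtain ⟨a, b, ha, hb, hab, hp⟩ := h23
    refine finish sg3 a b ha hb hab ?_ ?_ ?_ ?_
    · intro n h1 h4; interval_cases n <;> decide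
    · intro m n hm hn; interval_cases m <;> interval_cases n <;> decide
    · intro u v hu hv huv
      have hcc := hcons u v hu hv huv
      have hbu := hbd u; have hbv := hbd v
      have hn12 : ¬ ((c u = 1 ∧ c v = 2) ∨ (c u = 4 ∧ c v = 3)) :=
        fun hp => h12 ⟨u, v, hu, hv, huv, hp⟩
      have h4 : c v = 1 ∨ c v = 2 ∨ c v = 3 ∨ c v = 4 := by omega
      rcases h4 with h|h|h|h <;> rw [h] <;> simp only [sg3] <;> norm_num <;> omega
    · rw [hp.1, hp.2]; norm_num [sg3]
  -- remaining: pick a crossing edge; its pair must be (3,2)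
  obtain ⟨p⟩ := hG v0 w
  obtain ⟨a, b, ha, hb, hab⟩ := exists_cross S p (Reachable.refl v0) hw
  have hcc := hcons a b ha hb hab
  have hba := hbd a; have hbb := hbd b
  have hn12 : ¬ ((c a = 1 ∧ c b = 2) ∨ (c a = 4 ∧ c b = 3)) :=
    fun hp => h12 ⟨a, b, ha, hb, hab, hp⟩
  have hn21 : ¬ ((c a = 2 ∧ c b = 1) ∨ (c a = 3 ∧ c b = 4)) :=
    fun hp => h21 ⟨a, b, ha, hb, hab, hp⟩
  have hn23 : ¬ (c a = 2 ∧ c b = 3) := fun hp => h23 ⟨a, b, ha, hb, hab, hp⟩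
  have hp : c a = 3 ∧ c b = 2 := by omega
  refine finish sg4 a b ha hb hab ?_ ?_ ?_ ?_
  · intro n h1 h4; interval_cases n <;> decide
  · intro m n hm hn; interval_cases m <;> interval_cases n <;> decide
  · intro u v hu hv huv
    have hcc' := hcons u v hu hv huv
    have hbu := hbd u; have hbv := hbd v
    have hn12' : ¬ ((c u = 1 ∧ c v = 2) ∨ (c u = 4 ∧ c v = 3)) :=
      fun hp => h12 ⟨u, v, hu, hv, huv, hp⟩
    have h4 : c v = 1 ∨ c v = 2 ∨ c v = 3 ∨ c v = 4 := by omega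
    rcases h4 with h|h|h|h <;> rw [h] <;> simp only [sg4] <;> norm_num <;> omega
  · rw [hp.1, hp.2]; norm_num [sg4]

private lemma exists_connected_good [Fintype V] {G : SimpleGraph V} (hG : G.Connected)
    (hex : ∃ c, IsProperColoring G 4 c) :
    ∃ c, IsProperColoring G 4 c ∧ (Good G c).Connected := by
  classical
  obtain ⟨v0⟩ := hG.nonempty
  obtain ⟨c0, hc0⟩ := hex
  suffices H : ∀ (n : ℕ) (c : V → ℕ), IsProperColoring G 4 c →
      {x | ¬ (Good G c).Reachable v0 x}.ncard ≤ n →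
      ∃ c', IsProperColoring G 4 c' ∧ (Good G c').Connected from H _ c0 hc0 le_rfl
  intro n
  induction n with
  | zero =>
    intro c hc hcard
    have hempty : {x | ¬ (Good G c).Reachable v0 x} = ∅ := by
      rw [← Set.ncard_eq_zero (Set.toFinite _)]; omega
    have hall : ∀ x, (Good G c).Reachable v0 x := by
      intro x
      by_contra hx
      have : x ∈ {x | ¬ (Good G c).Reachable v0 x} := hx
      rw [hempty] at this
      exact this
    exact ⟨c, hc, (connected_iff_exists_forall_reachable _).mpr ⟨v0, hall⟩⟩
  | succ n ih =>
    intro c hc hcard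
    by_cases hall : ∀ x, (Good G c).Reachable v0 x
    · exact ⟨c, hc, (connected_iff_exists_forall_reachable _).mpr ⟨v0, hall⟩⟩
    push_neg at hall
    obtain ⟨w, hw⟩ := hall
    obtain ⟨c', hc', hmono, y, hy1, hy2⟩ := extend hG.preconnected hc v0 hw
    apply ih c' hc'
    have hss : {x | ¬ (Good G c').Reachable v0 x} ⊂ {x | ¬ (Good G c).Reachable v0 x} := by
      rw [Set.ssubset_def]
      exact ⟨fun x hx hr => hx (hmono x hr), fun hcon => (hcon hy1) hy2⟩
    have := Set.ncard_lt_ncard hss (Set.toFinite _)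
    omega

private lemma reach_del {G : SimpleGraph V} {v x : V}
    (hr : (G \ fromEdgeSet {s(v, x)}).Reachable v x) :
    ∀ {a b : V}, G.Walk a b → (G \ fromEdgeSet {s(v, x)}).Reachable a b := by
  intro a b p
  induction p with
  | nil => exact Reachable.refl _
  | @cons a y b h q ih =>
    refine Reachable.trans ?_ ih
    by_cases he : s(a, y) = s(v, x)
    · rw [Sym2.eq_iff] at he
      rcases he with ⟨rfl, rfl⟩ | ⟨rfl, rfl⟩
      · exact hr
      · exact hr.symm
    · refine Adj.reachable ?_
      rw [sdiff_adj]
      refine ⟨h, fun hf => ?_⟩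
      rw [fromEdgeSet_adj, Set.mem_singleton_iff] at hf
      exact he hf.1

private lemma exists_span_tree [Fintype V] :
    ∀ (n : ℕ) (G : SimpleGraph V), G.edgeSet.ncard ≤ n → G.Connected →
      ∃ T, T ≤ G ∧ T.IsTree := by
  intro n
  induction n with
  | zero =>
    intro G hcard hG
    refine ⟨G, le_rfl, hG, ?_⟩
    intro v cyc hcyc
    cases cyc with
    | nil => exact Walk.IsCycle.not_of_nil hcyc
    | @cons _ x _ h q =>
      have hmem : s(v, x) ∈ G.edgeSet := h
      have : 0 < G.edgeSet.ncard := (Set.ncard_pos (Set.toFinite _)).2 ⟨_, hmem⟩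
      omega
  | succ n ih =>
    intro G hcard hG
    by_cases hac : G.IsAcyclic
    · exact ⟨G, le_rfl, hG, hac⟩
    simp only [SimpleGraph.IsAcyclic, not_forall, not_not] at hac
    obtain ⟨v, cyc, hcyc⟩ := hac
    cases cyc with
    | nil => exact absurd hcyc Walk.IsCycle.not_of_nil
    | @cons _ x _ h q =>
      have hmem : s(v, x) ∈ (Walk.cons h q).edges := List.mem_cons_self
      have hnb : ¬ G.IsBridge s(v, x) := by
        rw [isBridge_iff_adj_and_forall_cycle_notMem]
        intro hforall
        exact hforall _ hcyc hmem
        exact h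
      rw [isBridge_iff] at hnb
      push_neg at hnb
      have hreach : (G \ fromEdgeSet {s(v, x)}).Reachable v x := hnb
      have hG'conn : (G \ fromEdgeSet {s(v, x)}).Connected := by
        haveI : Nonempty V := hG.nonempty
        refine ⟨fun a b => ?_⟩
        obtain ⟨p⟩ := hG.preconnected a b
        exact reach_del hreach p
      have hsub : (G \ fromEdgeSet {s(v, x)}).edgeSet ⊂ G.edgeSet := by
        rw [Set.ssubset_def]
        refine ⟨edgeSet_mono sdiff_le, fun hcon => ?_⟩
        have h1 : s(v, x) ∈ G.edgeSet := h
        have h2 := hcon h1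
        rw [mem_edgeSet, sdiff_adj] at h2
        exact h2.2 (by rw [fromEdgeSet_adj]; exact ⟨rfl, h.ne⟩)
      have hcard' : (G \ fromEdgeSet {s(v, x)}).edgeSet.ncard ≤ n := by
        have := Set.ncard_lt_ncard hsub (Set.toFinite _)
        omega
      obtain ⟨T, hT1, hT2⟩ := ih _ hcard' hG'conn
      exact ⟨T, hT1.trans sdiff_le, hT2⟩

end Aux

/-- Every connected nonbipartite graph `G` with `χ(G) ≤ 4` (e.g. a nonbipartite
planar graph) has a spanning tree `T` with `BBC_2(G,T) = 4`. -/
theorem stmt_6 {V : Type*} [Fintype V] (G : SimpleGraph V) (hG : G.Connected)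
    (hnbip : ¬ _root_.IsBipartite G) (hchi : chromNum G ≤ 4) :
    ∃ T : SimpleGraph V, T ≤ G ∧ T.IsTree ∧ BBC G T 2 = 4 := by
  classical
  -- the set of k admitting a proper coloring is nonempty
  have hKne : ({k : ℕ | ∃ c : V → ℕ, IsProperColoring G k c}).Nonempty := by
    have hprop : IsProperColoring G (Fintype.card V)
        (fun v => ((Fintype.equivFin V) v).val + 1) := by
      constructor
      · intro v
        dsimp only
        have := ((Fintype.equivFin V) v).isLt
        omega
      · intro u v huv hEq
        dsimp only at hEq
        have h1 : ((Fintype.equivFin V) u) = (Fintype.equivFin V) v := Fin.ext (by omega)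
        exact huv.ne ((Fintype.equivFin V).injective h1)
    exact ⟨_, _, hprop⟩
  have hmem : chromNum G ∈ {k : ℕ | ∃ c : V → ℕ, IsProperColoring G k c} :=
    Nat.sInf_mem hKne
  obtain ⟨c0, hc0⟩ := hmem
  have hc04 : IsProperColoring G 4 c0 :=
    ⟨fun v => ⟨(hc0.1 v).1, le_trans (hc0.1 v).2 hchi⟩, hc0.2⟩
  obtain ⟨c, hc, hgood⟩ := exists_connected_good hG ⟨c0, hc04⟩
  obtain ⟨T, hTle, hTtree⟩ := exists_span_tree ((Good G c).edgeSet.ncard) (Good G c) le_rfl hgood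
  have hTG : T ≤ G := hTle.trans (fun u v h => h.1)
  refine ⟨T, hTG, hTtree, ?_⟩
  have h4 : (4 : ℕ) ∈ {k : ℕ | ∃ c : V → ℕ, IsBackboneColoring G T 2 k c} := by
    refine ⟨c, hc, fun u v huv => ?_⟩
    have := (hTle huv).2
    exact_mod_cast this
  have hedge : ∃ u v : V, G.Adj u v := by
    by_contra hno
    push_neg at hno
    exact hnbip ⟨fun _ => true, fun u v h => absurd h (hno u v)⟩
  obtain ⟨u0, v0, huv0⟩ := hedge
  have hlb : ∀ k ∈ {k : ℕ | ∃ c : V → ℕ, IsBackboneColoring G T 2 k c}, 4 ≤ k := by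
    rintro k ⟨d, ⟨⟨hbound, hprop⟩, hback⟩⟩
    by_contra hk
    push_neg at hk
    have hnbr : ∀ z : V, ∃ y, T.Adj z y := by
      intro z
      have hz : ∃ t : V, t ≠ z := by
        by_cases h : u0 = z
        · exact ⟨v0, fun hh => huv0.ne (h.trans hh.symm)⟩
        · exact ⟨u0, h⟩
      obtain ⟨t, ht⟩ := hz
      obtain ⟨p⟩ := hTtree.isConnected.preconnected z t
      cases p with
      | nil => exact absurd rfl ht
      | cons h q => exact ⟨_, h⟩
    have h13 : ∀ z : V, d z = 1 ∨ d z = 3 := by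
      intro z
      obtain ⟨y, hy⟩ := hnbr z
      have hb := hback hy
      have h1 := hbound z
      have h2 := hbound y
      rw [le_abs] at hb
      omega
    refine hnbip ⟨fun z => decide (d z = 1), fun a b hab => ?_⟩
    have ha := h13 a
    have hb := h13 b
    have hne := hprop hab
    rcases ha with h|h <;> rcases hb with h'|h'
    · exact absurd (h.trans h'.symm) hne
    · simp [h, h']
    · simp [h, h']
    · exact absurd (h.trans h'.symm) hne
  have hMne : ({k : ℕ | ∃ c : V → ℕ, IsBackboneColoring G T 2 k c}).Nonempty := ⟨4, h4⟩
  exact le_antisymm (Nat.sInf_le h4) (hlb _ (Nat.sInf_mem hMne))
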